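/- Let 𝒢 = {h ∈ C([x_1,x_N]) : h(x_1)=y_1, h(x_N)=y_N} with the sup metric, let L_n be the affine maps with L_n(x_1)=x_n, L_n(x_N)=x_{n+1}, and define (Th)(x) = α_n h(L_n^{-1}(x)) + q_n(L_n^{-1}(x)) for x ∈ [x_n,x_{n+1}], where q_n ∈ C([x_1,x_N]) satisfy the matching conditions α_n y_1 + q_n(x_1) = y_n and α_n y_N + q_n(x_N) = y_{n+1}, with |α_n| ≤ r < 1. Then T maps 𝒢 into itself and is a contraction with ratio at most r = max_n |α_n|; hence T has a unique fixed point g ∈ 𝒢 satisfying g(L_n(x)) = α_n g(x) + q_n(x) for all x ∈ [x_1,x_N] and all n. -/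

import Mathlib

open Set

/-- Index of the subinterval containing `u`: largest `n ≤ M` with `x n ≤ u`. -/
noncomputable def rbInd (x : ℕ → ℝ) (M : ℕ) (u : ℝ) : ℕ :=
  Nat.findGreatest (fun n => x n ≤ u) M

/-- Inverse of the affine map `L n`. -/
noncomputable def rbInv (x : ℕ → ℝ) (M : ℕ) (n : ℕ) (u : ℝ) : ℝ :=
  (u - x n) / (x (n + 1) - x n) * (x (M + 1) - x 0) + x 0

/-- The Read–Bajraktarević operator on (extended) functions. -/
noncomputable def rbT (x : ℕ → ℝ) (M : ℕ) (α : ℕ → ℝ) (q : ℕ → ℝ → ℝ)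
    (h : ℝ → ℝ) (u : ℝ) : ℝ :=
  α (rbInd x M u) * h (rbInv x M (rbInd x M u) u) +
    q (rbInd x M u) (rbInv x M (rbInd x M u) u)

/-- Gluing continuity over a union of two closed sets. -/
lemma rb_glue {f : ℝ → ℝ} {s t : Set ℝ} (hs : IsClosed s) (ht : IsClosed t)
    (hfs : ContinuousOn f s) (hft : ContinuousOn f t) : ContinuousOn f (s ∪ t) := by
  intro u hu
  apply ContinuousWithinAt.union
  · by_cases h : u ∈ s
    · exact hfs u h
    · exact continuousWithinAt_of_notMem_closure (by rwa [hs.closure_eq])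
  · by_cases h : u ∈ t
    · exact hft u h
    · exact continuousWithinAt_of_notMem_closure (by rwa [ht.closure_eq])

/-- Read–Bajraktarević operator fixed point: existence and uniqueness of the
fractal interpolation function satisfying `g (L n t) = α n * g t + q n t`. -/
theorem read_bajraktarevic_fixed_point (N : ℕ) (hN : 2 ≤ N) (x y : ℕ → ℝ)
    (hx : ∀ i j, i < j → j ≤ N - 1 → x i < x j)
    (L : ℕ → ℝ → ℝ)
    (hL : ∀ n t, L n t = (x (n+1) - x n) / (x (N-1) - x 0) * (t - x 0) + x n)
    (α : ℕ → ℝ) (r : ℝ) (hr : r < 1) (hα : ∀ n, n ≤ N - 2 → |α n| ≤ r)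
    (q : ℕ → ℝ → ℝ)
    (hq : ∀ n, n ≤ N - 2 → ContinuousOn (q n) (Set.Icc (x 0) (x (N-1))))
    (hmatch1 : ∀ n, n ≤ N - 2 → α n * y 0 + q n (x 0) = y n)
    (hmatch2 : ∀ n, n ≤ N - 2 → α n * y (N-1) + q n (x (N-1)) = y (n+1)) :
    (∃ g : ℝ → ℝ, ContinuousOn g (Set.Icc (x 0) (x (N-1))) ∧
      g (x 0) = y 0 ∧ g (x (N-1)) = y (N-1) ∧
      ∀ n, n ≤ N - 2 → ∀ t ∈ Set.Icc (x 0) (x (N-1)),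
        g (L n t) = α n * g t + q n t) ∧
    (∀ g₁ g₂ : ℝ → ℝ,
      (ContinuousOn g₁ (Set.Icc (x 0) (x (N-1))) ∧ g₁ (x 0) = y 0 ∧ g₁ (x (N-1)) = y (N-1) ∧
        ∀ n, n ≤ N - 2 → ∀ t ∈ Set.Icc (x 0) (x (N-1)), g₁ (L n t) = α n * g₁ t + q n t) →
      (ContinuousOn g₂ (Set.Icc (x 0) (x (N-1))) ∧ g₂ (x 0) = y 0 ∧ g₂ (x (N-1)) = y (N-1) ∧
        ∀ n, n ≤ N - 2 → ∀ t ∈ Set.Icc (x 0) (x (N-1)), g₂ (L n t) = α n * g₂ t + q n t) →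
      Set.EqOn g₁ g₂ (Set.Icc (x 0) (x (N-1)))) := by
  classical
  set M : ℕ := N - 2 with hM
  have hNM : N - 1 = M + 1 := by omega
  rw [hNM] at hx hL hq hmatch2 ⊢
  -- basic ordering facts
  have hxm : ∀ n, n ≤ M → x n < x (n + 1) := fun n hn => hx n (n + 1) (by omega) (by omega)
  have hmono : ∀ i j, i ≤ j → j ≤ M + 1 → x i ≤ x j := by
    intro i j hij hj
    rcases eq_or_lt_of_le hij with rfl | h
    · exact le_rfl
    · exact (hx i j h hj).le
  have hab : x 0 < x (M + 1) := hx 0 (M + 1) (by omega) le_rfl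
  have hIsub : ∀ n, n ≤ M → Icc (x n) (x (n + 1)) ⊆ Icc (x 0) (x (M + 1)) := fun n hn =>
    Icc_subset_Icc (hmono 0 n (by omega) (by omega)) (hmono (n + 1) (M + 1) (by omega) le_rfl)
  -- index function facts
  have hind_le : ∀ u, rbInd x M u ≤ M := fun u => Nat.findGreatest_le M
  have hind_lb : ∀ u, x 0 ≤ u → x (rbInd x M u) ≤ u := by
    intro u hu
    exact Nat.findGreatest_spec (P := fun n => x n ≤ u) (m := 0) (Nat.zero_le M) hu
  have hind_ub : ∀ u, u ≤ x (M + 1) → u ≤ x (rbInd x M u + 1) := by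
    intro u hu
    rcases eq_or_lt_of_le (hind_le u) with h | h
    · rw [h]; exact hu
    · by_contra hcon
      push_neg at hcon
      exact Nat.findGreatest_is_greatest (P := fun n => x n ≤ u) (n := M)
        (k := rbInd x M u + 1) (Nat.lt_succ_self _) (by omega) hcon.le
  have hind_eq : ∀ n, n ≤ M → ∀ u, u ∈ Ico (x n) (x (n + 1)) → rbInd x M u = n := by
    intro n hn u hu
    rw [rbInd, Nat.findGreatest_eq_iff]
    refine ⟨hn, fun _ => hu.1, fun m hm hmM hxm' => ?_⟩
    exact absurd hxm' (not_le.mpr (lt_of_lt_of_le hu.2 (hmono (n + 1) m hm (by omega))))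
  have hind_b : rbInd x M (x (M + 1)) = M := by
    rw [rbInd, Nat.findGreatest_eq_iff]
    exact ⟨le_rfl, fun _ => (hxm M le_rfl).le, fun m hm hmM => absurd hmM (by omega)⟩
  -- inverse map facts
  have hd : ∀ n, n ≤ M → (0:ℝ) < x (n + 1) - x n := fun n hn => sub_pos.mpr (hxm n hn)
  have hba : (0:ℝ) < x (M + 1) - x 0 := sub_pos.mpr hab
  have hL_Linv : ∀ n, n ≤ M → ∀ u, L n (rbInv x M n u) = u := by
    intro n hn u
    rw [hL, rbInv]
    have h1 : x (n+1) - x n ≠ 0 := (hd n hn).ne'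
    have h2 : x (M+1) - x 0 ≠ 0 := hba.ne'
    field_simp
    ring
  have hLinv_L : ∀ n, n ≤ M → ∀ t, rbInv x M n (L n t) = t := by
    intro n hn t
    rw [hL, rbInv]
    have h1 : x (n+1) - x n ≠ 0 := (hd n hn).ne'
    have h2 : x (M+1) - x 0 ≠ 0 := hba.ne'
    field_simp
    ring
  have hLinv_mem : ∀ n, n ≤ M → ∀ u ∈ Icc (x n) (x (n + 1)),
      rbInv x M n u ∈ Icc (x 0) (x (M + 1)) := by
    intro n hn u hu
    rw [rbInv]
    constructor
    · have : (0:ℝ) ≤ (u - x n) / (x (n + 1) - x n) * (x (M + 1) - x 0) :=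
        mul_nonneg (div_nonneg (by linarith [hu.1]) (hd n hn).le) hba.le
      linarith
    · have h1 : (u - x n) / (x (n + 1) - x n) ≤ 1 :=
        (div_le_one (hd n hn)).mpr (by linarith [hu.2])
      nlinarith [hba]
  have hLmem : ∀ n, n ≤ M → ∀ t ∈ Icc (x 0) (x (M + 1)), L n t ∈ Icc (x n) (x (n + 1)) := by
    intro n hn t ht
    rw [hL]
    constructor
    · have : (0:ℝ) ≤ (x (n+1) - x n) / (x (M+1) - x 0) * (t - x 0) :=
        mul_nonneg (div_nonneg (hd n hn).le hba.le) (by linarith [ht.1])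
      linarith
    · have h1 : (x (n+1) - x n) / (x (M+1) - x 0) * (t - x 0)
          ≤ (x (n+1) - x n) / (x (M+1) - x 0) * (x (M+1) - x 0) :=
        mul_le_mul_of_nonneg_left (by linarith [ht.2]) (div_nonneg (hd n hn).le hba.le)
      have h2 : (x (n+1) - x n) / (x (M+1) - x 0) * (x (M+1) - x 0) = x (n+1) - x n := by
        field_simp
      linarith
  have hLinv_knot1 : ∀ n, rbInv x M n (x n) = x 0 := by
    intro n; simp [rbInv]
  have hLinv_knot2 : ∀ n, n ≤ M → rbInv x M n (x (n + 1)) = x (M + 1) := by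
    intro n hn
    rw [rbInv, div_self (hd n hn).ne']
    ring
  have hr0 : (0:ℝ) ≤ r := (abs_nonneg (α 0)).trans (hα 0 (by omega))
  -- piece formula
  have hpiece : ∀ h : ℝ → ℝ, h (x 0) = y 0 → h (x (M + 1)) = y (M + 1) →
      ∀ n, n ≤ M → ∀ u ∈ Icc (x n) (x (n + 1)),
        rbT x M α q h u = α n * h (rbInv x M n u) + q n (rbInv x M n u) := by
    intro h h0 h1 n hn u hu
    rcases lt_or_eq_of_le hu.2 with hlt | heq
    · have hiu : rbInd x M u = n := hind_eq n hn u ⟨hu.1, hlt⟩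
      rw [rbT, hiu]
    · rcases eq_or_lt_of_le hn with rfl | hnM
      · rw [rbT, heq, hind_b]
      · have hn1 : n + 1 ≤ M := by omega
        have hiu : rbInd x M u = n + 1 := by
          apply hind_eq (n + 1) hn1
          rw [heq]
          exact ⟨le_rfl, hxm (n + 1) hn1⟩
        rw [rbT, hiu, heq, hLinv_knot1, hLinv_knot2 n hn, h0, h1,
          hmatch1 (n + 1) hn1, hmatch2 n hn]
  -- endpoint values
  have hTa : ∀ h : ℝ → ℝ, h (x 0) = y 0 → rbT x M α q h (x 0) = y 0 := by
    intro h h0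
    have hia : rbInd x M (x 0) = 0 := hind_eq 0 (by omega) (x 0) ⟨le_rfl, hxm 0 (by omega)⟩
    rw [rbT, hia, hLinv_knot1, h0, hmatch1 0 (by omega)]
  have hTb : ∀ h : ℝ → ℝ, h (x (M + 1)) = y (M + 1) →
      rbT x M α q h (x (M + 1)) = y (M + 1) := by
    intro h h1
    rw [rbT, hind_b, hLinv_knot2 M le_rfl, h1, hmatch2 M le_rfl]
  -- continuity of the pieces
  have hFcont : ∀ h : ℝ → ℝ, ContinuousOn h (Icc (x 0) (x (M + 1))) → ∀ n, n ≤ M →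
      ContinuousOn (fun u => α n * h (rbInv x M n u) + q n (rbInv x M n u))
        (Icc (x n) (x (n + 1))) := by
    intro h hc n hn
    have hinvc : Continuous (rbInv x M n) := by
      unfold rbInv; fun_prop
    have hmap : MapsTo (rbInv x M n) (Icc (x n) (x (n + 1))) (Icc (x 0) (x (M + 1))) :=
      fun u hu => hLinv_mem n hn u hu
    exact (continuousOn_const.mul (hc.comp hinvc.continuousOn hmap)).add
      ((hq n hn).comp hinvc.continuousOn hmap)
  -- continuity of the glued operator
  have hTcont : ∀ h : ℝ → ℝ, ContinuousOn h (Icc (x 0) (x (M + 1))) →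
      h (x 0) = y 0 → h (x (M + 1)) = y (M + 1) →
      ContinuousOn (rbT x M α q h) (Icc (x 0) (x (M + 1))) := by
    intro h hc h0 h1
    have key : ∀ k, k ≤ M → ContinuousOn (rbT x M α q h) (Icc (x 0) (x (k + 1))) := by
      intro k
      induction k with
      | zero =>
        intro _
        exact (hFcont h hc 0 (by omega)).congr
          (fun u hu => hpiece h h0 h1 0 (by omega) u hu)
      | succ k ih =>
        intro hk
        have hks : k ≤ M := by omega
        have hpc : ContinuousOn (rbT x M α q h) (Icc (x (k + 1)) (x (k + 2))) :=
          (hFcont h hc (k + 1) hk).congr (fun u hu => hpiece h h0 h1 (k + 1) hk u hu)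
        have := rb_glue isClosed_Icc isClosed_Icc (ih hks) hpc
        rwa [Icc_union_Icc_eq_Icc (hmono 0 (k + 1) (by omega) (by omega))
          ((hxm (k + 1) hk).le)] at this
    exact key M le_rfl
  -- the complete metric space of candidate functions
  have haI : x 0 ∈ Icc (x 0) (x (M + 1)) := ⟨le_rfl, hab.le⟩
  have hbI : x (M + 1) ∈ Icc (x 0) (x (M + 1)) := ⟨hab.le, le_rfl⟩
  set S : Set C(Icc (x 0) (x (M + 1)), ℝ) :=
    {f | f ⟨x 0, haI⟩ = y 0 ∧ f ⟨x (M + 1), hbI⟩ = y (M + 1)} with hS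
  have hSclosed : IsClosed S :=
    (isClosed_eq (continuous_eval_const _) continuous_const).inter
      (isClosed_eq (continuous_eval_const _) continuous_const)
  haveI : CompleteSpace S := hSclosed.completeSpace_coe
  -- extension of elements to ℝ
  set ext : C(Icc (x 0) (x (M + 1)), ℝ) → ℝ → ℝ :=
    fun f u => f (Set.projIcc (x 0) (x (M + 1)) hab.le u) with hext
  have hext_mem : ∀ f : C(Icc (x 0) (x (M + 1)), ℝ), ∀ u (hu : u ∈ Icc (x 0) (x (M + 1))),
      ext f u = f ⟨u, hu⟩ := by
    intro f u hu
    simp [hext, Set.projIcc_of_mem hab.le hu]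
  have hext_cont : ∀ f : C(Icc (x 0) (x (M + 1)), ℝ), Continuous (ext f) := by
    intro f
    exact f.continuous.comp continuous_projIcc
  have hS_op : ∀ f : S, ContinuousOn (rbT x M α q (ext f.1)) (Icc (x 0) (x (M + 1))) ∧
      rbT x M α q (ext f.1) (x 0) = y 0 ∧
      rbT x M α q (ext f.1) (x (M + 1)) = y (M + 1) := by
    intro f
    have h0 : ext f.1 (x 0) = y 0 := by rw [hext_mem f.1 _ haI]; exact f.2.1
    have h1 : ext f.1 (x (M + 1)) = y (M + 1) := by rw [hext_mem f.1 _ hbI]; exact f.2.2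
    exact ⟨hTcont _ (hext_cont f.1).continuousOn h0 h1, hTa _ h0, hTb _ h1⟩
  -- the bundled operator
  set Θ : S → S := fun f =>
    ⟨⟨fun p => rbT x M α q (ext f.1) p,
      continuousOn_iff_continuous_restrict.mp (hS_op f).1⟩,
      (hS_op f).2.1, (hS_op f).2.2⟩ with hΘ
  haveI : Nonempty S := by
    refine ⟨⟨⟨fun p => y 0 + ((p : ℝ) - x 0) * ((y (M + 1) - y 0) / (x (M + 1) - x 0)),
      by fun_prop⟩, by simp, ?_⟩⟩
    show y 0 + (x (M + 1) - x 0) * ((y (M + 1) - y 0) / (x (M + 1) - x 0)) = y (M + 1)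
    have h2 : x (M+1) - x 0 ≠ 0 := hba.ne'
    field_simp
    ring
  -- contraction
  have hcontr : ContractingWith ⟨r, hr0⟩ Θ := by
    constructor
    · exact_mod_cast hr
    · apply LipschitzWith.of_dist_le_mul
      intro f g
      simp only [Subtype.dist_eq, NNReal.coe_mk]
      change _ ≤ r * _
      rw [ContinuousMap.dist_le (mul_nonneg hr0 dist_nonneg)]
      intro p
      show dist (rbT x M α q (ext f.1) p) (rbT x M α q (ext g.1) p) ≤ r * dist f.1 g.1
      have heq : rbT x M α q (ext f.1) p - rbT x M α q (ext g.1) p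
          = α (rbInd x M p) * (ext f.1 (rbInv x M (rbInd x M p) p)
            - ext g.1 (rbInv x M (rbInd x M p) p)) := by
        rw [rbT, rbT]; ring
      rw [Real.dist_eq, heq, abs_mul]
      have h1 : |α (rbInd x M (p:ℝ))| ≤ r := hα _ (hind_le _)
      have h2 : |ext f.1 (rbInv x M (rbInd x M p) p) - ext g.1 (rbInv x M (rbInd x M p) p)|
          ≤ dist f.1 g.1 := by
        rw [hext, ← Real.dist_eq]
        exact ContinuousMap.dist_apply_le_dist _
      exact mul_le_mul h1 h2 (abs_nonneg _) hr0
  -- helper: functional equation characterizes fixed points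
  have hfixed_of_eq : ∀ h : ℝ → ℝ, (∀ n, n ≤ M → ∀ t ∈ Icc (x 0) (x (M + 1)),
      h (L n t) = α n * h t + q n t) →
      ∀ f : S, (∀ u (hu : u ∈ Icc (x 0) (x (M + 1))), f.1 ⟨u, hu⟩ = h u) → Θ f = f := by
    intro h hfe f hfh
    apply Subtype.ext
    apply ContinuousMap.ext
    intro p
    show rbT x M α q (ext f.1) p = f.1 p
    have hu : (p : ℝ) ∈ Icc (x 0) (x (M + 1)) := p.2
    have hn : rbInd x M p ≤ M := hind_le _
    have humem : (p:ℝ) ∈ Icc (x (rbInd x M p)) (x (rbInd x M p + 1)) :=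
      ⟨hind_lb _ hu.1, hind_ub _ hu.2⟩
    have htI : rbInv x M (rbInd x M p) p ∈ Icc (x 0) (x (M + 1)) :=
      hLinv_mem _ hn _ humem
    have hfu : ext f.1 (rbInv x M (rbInd x M p) p) = h (rbInv x M (rbInd x M p) p) := by
      rw [hext_mem f.1 _ htI]; exact hfh _ htI
    rw [rbT, hfu]
    have := hfe _ hn _ htI
    rw [hL_Linv _ hn] at this
    rw [← this]
    have : f.1 p = f.1 ⟨(p:ℝ), hu⟩ := rfl
    rw [this, hfh _ hu]
  -- the fixed point
  set gfix : S := ContractingWith.fixedPoint Θ hcontr with hgfix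
  have hfixed : Θ gfix = gfix := hcontr.fixedPoint_isFixedPt
  have h0 : ext gfix.1 (x 0) = y 0 := by rw [hext_mem gfix.1 _ haI]; exact gfix.2.1
  have h1 : ext gfix.1 (x (M + 1)) = y (M + 1) := by
    rw [hext_mem gfix.1 _ hbI]; exact gfix.2.2
  have hfix_pt : ∀ u (hu : u ∈ Icc (x 0) (x (M + 1))),
      rbT x M α q (ext gfix.1) u = ext gfix.1 u := by
    intro u hu
    have e1 : rbT x M α q (ext gfix.1) u = (Θ gfix).1 ⟨u, hu⟩ := rfl
    rw [e1, hfixed]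
    exact (hext_mem gfix.1 u hu).symm
  constructor
  · -- existence
    refine ⟨ext gfix.1, (hext_cont gfix.1).continuousOn, h0, h1, ?_⟩
    intro n hn t ht
    have hu : L n t ∈ Icc (x n) (x (n + 1)) := hLmem n hn t ht
    have huI : L n t ∈ Icc (x 0) (x (M + 1)) := hIsub n hn hu
    rw [← hfix_pt _ huI, hpiece (ext gfix.1) h0 h1 n hn _ hu, hLinv_L n hn t]
  · -- uniqueness
    rintro g₁ g₂ ⟨hc₁, ha₁, hb₁, hfe₁⟩ ⟨hc₂, ha₂, hb₂, hfe₂⟩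
    set f₁ : S := ⟨⟨fun p => g₁ p, continuousOn_iff_continuous_restrict.mp hc₁⟩,
      ha₁, hb₁⟩ with hf₁
    set f₂ : S := ⟨⟨fun p => g₂ p, continuousOn_iff_continuous_restrict.mp hc₂⟩,
      ha₂, hb₂⟩ with hf₂
    have hfp₁ : Θ f₁ = f₁ := hfixed_of_eq g₁ hfe₁ f₁ (fun u hu => rfl)
    have hfp₂ : Θ f₂ = f₂ := hfixed_of_eq g₂ hfe₂ f₂ (fun u hu => rfl)
    have : f₁ = f₂ := by
      rw [hcontr.fixedPoint_unique hfp₁, hcontr.fixedPoint_unique hfp₂]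
    intro u hu
    have := congrArg (fun f : S => f.1 ⟨u, hu⟩) this
    exact this
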